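/- Let α ∈ ℕ and n ≥ 1. Define the higher-order Laguerre-type operator L_{2α+4}^α y(x) = (−1)^{α+1} e^x x · D_x^{α+2}( e^{−x} D_x^{α+2}( x^{α+1} y(x) ) ). Then L_{2α+4}^α L_n^α(x) + (n)_{α+2} L_n^α(x) = (n+1)_α (α+1)(α+2) L_{n-1}^{α+2}(x) as functions on ℝ. -/

import Mathlib

open Real Finset

open Polynomial

noncomputable def laguerre (n : ℕ) (γ : ℝ) : ℝ → ℝ := fun x =>
  ∑ k ∈ Finset.range (n + 1),
    (-1 : ℝ) ^ k * (ascPochhammer ℝ (n - k)).eval (γ + (k : ℝ) + 1)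
      / ((n - k).factorial * k.factorial) * x ^ k

noncomputable def lagTypeOp (α : ℕ) (y : ℝ → ℝ) : ℝ → ℝ := fun x =>
  (-1 : ℝ) ^ (α + 1) * Real.exp x * x *
    iteratedDeriv (α + 2)
      (fun t => Real.exp (-t) * iteratedDeriv (α + 2) (fun s => s ^ (α + 1) * y s) t) x

noncomputable def lco (n k : ℕ) (γ : ℝ) : ℝ :=
  (-1 : ℝ) ^ k * (ascPochhammer ℝ (n - k)).eval (γ + (k : ℝ) + 1)
    / ((n - k).factorial * k.factorial)

noncomputable def lagP (n : ℕ) (γ : ℝ) : ℝ[X] :=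
  ∑ k ∈ Finset.range (n + 1), C (lco n k γ) * X ^ k

lemma lagP_eval (n : ℕ) (γ x : ℝ) : (lagP n γ).eval x = laguerre n γ x := by
  simp [lagP, lco, laguerre, eval_finset_sum]

lemma poch_sr (m : ℕ) (y : ℝ) :
    (ascPochhammer ℝ (m+1)).eval y = (ascPochhammer ℝ m).eval y * (y + m) := by
  simp [ascPochhammer_succ_right]

lemma poch_sl (m : ℕ) (y : ℝ) :
    (ascPochhammer ℝ (m+1)).eval y = y * (ascPochhammer ℝ m).eval (y + 1) := by
  simp [ascPochhammer_succ_left, eval_comp]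

lemma poch_diff (m : ℕ) (y : ℝ) :
    (ascPochhammer ℝ (m+1)).eval (y+1)
      = (ascPochhammer ℝ (m+1)).eval y + (m+1) * (ascPochhammer ℝ m).eval (y+1) := by
  rw [poch_sr m (y+1), poch_sl m y]; ring

lemma lagP_coeff (n k : ℕ) (γ : ℝ) :
    (lagP n γ).coeff k = if k ≤ n then lco n k γ else 0 := by
  simp only [lagP, finset_sum_coeff, coeff_C_mul, coeff_X_pow, mul_ite, mul_one, mul_zero]
  rw [Finset.sum_ite_eq (Finset.range (n+1)) k (fun j => lco n j γ)]
  simp [Nat.lt_succ_iff]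

lemma S1 (n k : ℕ) (γ : ℝ) : lco (n+1) (k+1) γ * (k+1) = -(lco n k (γ+1)) := by
  unfold lco
  have h : (n+1) - (k+1) = n - k := by omega
  rw [h]
  have h3 : (γ + ((k:ℝ)+1) + 1) = (γ+1) + k + 1 := by ring
  push_cast
  rw [h3, Nat.factorial_succ]
  have hf : ((n-k).factorial : ℝ) ≠ 0 := by positivity
  have hk : (k.factorial : ℝ) ≠ 0 := by positivity
  push_cast
  field_simp
  ring

-- S2 : parameter-shift scalar identity, k ≤ n
lemma S2 (m k : ℕ) (γ : ℝ) :
    lco (k+m+1) k γ = lco (k+m+1) k (γ+1) - lco (k+m) k (γ+1) := by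
  unfold lco
  have h1 : (k+m+1) - k = m+1 := by omega
  have h2 : (k+m) - k = m := by omega
  rw [h1, h2]
  have h3 : (γ+1) + (k:ℝ) + 1 = (γ + k + 1) + 1 := by ring
  rw [h3]
  have key := poch_diff m (γ + k + 1)
  have hm : ((m+1).factorial : ℝ) ≠ 0 := by positivity
  have hm' : (m.factorial : ℝ) ≠ 0 := by positivity
  have hk : (k.factorial : ℝ) ≠ 0 := by positivity
  rw [key, Nat.factorial_succ]
  push_cast
  field_simp
  ring
-- S3
lemma S3 (j k m : ℕ) :
    lco (k+j) k ((m:ℝ)+1) * ((k:ℝ)+m+1) = ((k:ℝ)+j+m+1) * lco (k+j) k m := by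
  unfold lco
  have h1 : (k+j) - k = j := by omega
  rw [h1]
  have h3 : ((m:ℝ)+1) + k + 1 = ((m:ℝ) + k + 1) + 1 := by ring
  rw [h3]
  have key : ((m:ℝ)+k+1) * (ascPochhammer ℝ j).eval (((m:ℝ)+k+1)+1)
      = (ascPochhammer ℝ j).eval ((m:ℝ)+k+1) * (((m:ℝ)+k+1) + j) := by
    rw [← poch_sl, poch_sr]
  have hj : (j.factorial : ℝ) ≠ 0 := by positivity
  have hk : (k.factorial : ℝ) ≠ 0 := by positivity
  field_simp
  linear_combination key

-- S4a
lemma S4a (k : ℕ) (β : ℝ) :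
    ((k:ℝ)+β+1) * lco k 0 β = ((k:ℝ)+1) * lco (k+1) 0 β := by
  unfold lco
  simp only [Nat.sub_zero, pow_zero, Nat.factorial_zero, Nat.cast_one, mul_one, one_mul,
    Nat.cast_zero]
  rw [poch_sr k (β + 0 + 1), Nat.factorial_succ]
  have hk : (k.factorial : ℝ) ≠ 0 := by positivity
  push_cast
  field_simp
  ring

-- S4b : 1 ≤ j = i+1 ≤ k, k = i+m+1
lemma S4b (i m : ℕ) (β : ℝ) :
    lco (i+m+1) i (β+1)
      = (((i+m+1:ℕ):ℝ)+β+1) * lco (i+m+1) (i+1) β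
        - (((i+m+1:ℕ):ℝ)+1) * lco (i+m+1+1) (i+1) β := by
  unfold lco
  have h1 : (i+m+1) - i = m+1 := by omega
  have h2 : (i+m+1) - (i+1) = m := by omega
  have h3 : (i+m+1+1) - (i+1) = m+1 := by omega
  rw [h1, h2, h3, Nat.factorial_succ m, Nat.factorial_succ i]
  push_cast
  have e1 : β + 1 + (i:ℝ) + 1 = β + (i:ℝ) + 1 + 1 := by ring
  have e2 : β + ((i:ℝ) + 1) + 1 = β + (i:ℝ) + 1 + 1 := by ring
  rw [e1, e2]
  rw [poch_sr m (β + (i:ℝ) + 1 + 1)]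
  have hm : (m.factorial : ℝ) ≠ 0 := by positivity
  have hi : (i.factorial : ℝ) ≠ 0 := by positivity
  field_simp
  ring

-- S4c : j = k+1
lemma S4c (k : ℕ) (β : ℝ) :
    lco k k (β+1) = -(((k:ℝ)+1) * lco (k+1) (k+1) β) := by
  unfold lco
  simp only [Nat.sub_self]
  have hk : (k.factorial : ℝ) ≠ 0 := by positivity
  rw [Nat.factorial_succ]
  simp only [ascPochhammer_zero, eval_one, Nat.factorial_zero]
  push_cast
  field_simp
  ring

-- L1
lemma L1 (n : ℕ) (γ : ℝ) : derivative (lagP (n+1) γ) = -(lagP n (γ+1)) := by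
  ext k
  rw [coeff_derivative, coeff_neg, lagP_coeff, lagP_coeff]
  by_cases hk : k ≤ n
  · rw [if_pos (by omega : k + 1 ≤ n + 1), if_pos hk]
    exact S1 n k γ
  · rw [if_neg (by omega : ¬ (k + 1 ≤ n + 1)), if_neg hk]
    simp

-- L2
lemma L2 (n : ℕ) (γ : ℝ) : lagP (n+1) γ = lagP (n+1) (γ+1) - lagP n (γ+1) := by
  ext k
  rw [coeff_sub, lagP_coeff, lagP_coeff, lagP_coeff]
  by_cases hk : k ≤ n
  · rw [if_pos (by omega : k ≤ n + 1), if_pos (by omega : k ≤ n + 1), if_pos hk]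
    obtain ⟨m, rfl⟩ : ∃ m, n = k + m := ⟨n - k, by omega⟩
    exact S2 m k γ
  · by_cases hk2 : k ≤ n + 1
    · rw [if_pos hk2, if_pos hk2, if_neg hk]
      have hkn : k = n + 1 := by omega
      subst hkn
      unfold lco
      simp
    · rw [if_neg hk2, if_neg hk2, if_neg hk]; simp

-- L3
lemma L3 (n m : ℕ) :
    derivative (X^(m+1) * lagP n ((m:ℝ)+1)) = ((n:ℝ)+(m:ℝ)+1) • (X^m * lagP n (m:ℝ)) := by
  unfold lagP
  rw [Finset.mul_sum, Finset.mul_sum, Finset.smul_sum, map_sum]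
  refine Finset.sum_congr rfl fun k hk => ?_
  have hkn : k ≤ n := by simpa [Nat.lt_succ_iff] using hk
  obtain ⟨j, rfl⟩ : ∃ j, n = k + j := ⟨n - k, by omega⟩
  have h1 : X^(m+1) * (C (lco (k+j) k ((m:ℝ)+1)) * X ^ k)
      = C (lco (k+j) k ((m:ℝ)+1)) * X ^ (k+m+1) := by ring
  rw [h1, derivative_C_mul, derivative_X_pow]
  have e : (X:ℝ[X])^m * (C (lco (k+j) k (m:ℝ)) * X^k) = C (lco (k+j) k (m:ℝ)) * X^(k+m) := by
    ring
  rw [e, smul_eq_C_mul]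
  rw [show (k+m+1) - 1 = k + m from by omega, ← mul_assoc, ← mul_assoc, ← C_mul, ← C_mul]
  congr 1
  congr 1
  have h3 := S3 j k m
  push_cast at h3 ⊢
  linear_combination h3

-- L4
lemma L4 (k : ℕ) (β : ℝ) :
    X * lagP k (β+1) = ((k:ℝ)+β+1) • lagP k β - ((k:ℝ)+1) • lagP (k+1) β := by
  ext j
  rw [coeff_sub, coeff_smul, coeff_smul, lagP_coeff, lagP_coeff, smul_eq_mul, smul_eq_mul]
  cases j with
  | zero =>
    rw [mul_coeff_zero]
    simp only [coeff_X_zero, zero_mul]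
    rw [if_pos (Nat.zero_le k), if_pos (Nat.zero_le (k+1))]
    have := S4a k β
    linarith
  | succ i =>
    rw [coeff_X_mul, lagP_coeff]
    by_cases hik : i + 1 ≤ k
    · rw [if_pos (by omega : i ≤ k), if_pos hik, if_pos (by omega : i + 1 ≤ k + 1)]
      obtain ⟨m, rfl⟩ : ∃ m, k = i + m + 1 := ⟨k - i - 1, by omega⟩
      have := S4b i m β
      push_cast at this ⊢
      linarith
    · by_cases hik2 : i ≤ k
      · have hk : i = k := by omega
        subst hk
        rw [if_pos le_rfl, if_neg hik, if_pos (by omega : i + 1 ≤ i + 1)]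
        have := S4c i β
        push_cast at this ⊢
        linarith
      · rw [if_neg hik2, if_neg (by omega : ¬ (i+1 ≤ k)), if_neg (by omega : ¬ (i+1 ≤ k+1))]
        simp

noncomputable def lagZ (n : ℤ) (γ : ℝ) : ℝ[X] := if 0 ≤ n then lagP n.toNat γ else 0

lemma lagZ_coe (n : ℕ) (γ : ℝ) : lagZ (n : ℤ) γ = lagP n γ := by
  simp [lagZ]

lemma lagZ_neg {n : ℤ} (h : n < 0) (γ : ℝ) : lagZ n γ = 0 := by
  simp [lagZ, not_le.2 h]

lemma lagP_zero (γ : ℝ) : lagP 0 γ = C 1 := by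
  simp [lagP, lco]

-- Z1
lemma Z1 (n : ℤ) (γ : ℝ) : derivative (lagZ n γ) = -lagZ (n-1) (γ+1) := by
  rcases lt_trichotomy n 0 with h | h | h
  · rw [lagZ_neg h, lagZ_neg (by omega)]; simp
  · subst h
    have e1 : lagZ ((0:ℤ) - 1) (γ+1) = 0 := lagZ_neg (by norm_num) _
    rw [e1, show lagZ (0:ℤ) γ = lagP 0 γ from lagZ_coe 0 γ, lagP_zero]
    simp
  · obtain ⟨m, rfl⟩ : ∃ m : ℕ, n = (m : ℤ) + 1 := ⟨(n-1).toNat, by omega⟩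
    rw [show ((m:ℤ) + 1) - 1 = (m:ℤ) from by ring]
    rw [show ((m:ℤ) + 1) = ((m+1 : ℕ) : ℤ) from by push_cast; ring]
    rw [lagZ_coe, lagZ_coe, L1]

-- Z2
lemma Z2 (n : ℤ) (γ : ℝ) : lagZ n γ = lagZ n (γ+1) - lagZ (n-1) (γ+1) := by
  rcases lt_trichotomy n 0 with h | h | h
  · rw [lagZ_neg h, lagZ_neg h, lagZ_neg (by omega)]; simp
  · subst h
    have e1 : lagZ ((0:ℤ) - 1) (γ+1) = 0 := lagZ_neg (by norm_num) _
    rw [e1, show lagZ (0:ℤ) γ = lagP 0 γ from lagZ_coe 0 γ,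
      show lagZ (0:ℤ) (γ+1) = lagP 0 (γ+1) from lagZ_coe 0 (γ+1), lagP_zero, lagP_zero]
    simp
  · obtain ⟨m, rfl⟩ : ∃ m : ℕ, n = (m : ℤ) + 1 := ⟨(n-1).toNat, by omega⟩
    rw [show ((m:ℤ) + 1) - 1 = (m:ℤ) from by ring]
    rw [show ((m:ℤ) + 1) = ((m+1 : ℕ) : ℤ) from by push_cast; ring]
    rw [lagZ_coe, lagZ_coe, lagZ_coe]
    exact L2 m γ

-- Z5
lemma Z5 (n : ℤ) (γ : ℝ) : derivative (lagZ n γ) - lagZ n γ = -lagZ n (γ+1) := by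
  rw [Z1, Z2 n γ]
  abel

-- Z4
lemma Z4 (k : ℤ) (β : ℝ) :
    X * lagZ k (β+1) = ((k:ℝ)+β+1) • lagZ k β - ((k:ℝ)+1) • lagZ (k+1) β := by
  rcases lt_trichotomy k (-1) with h | h | h
  · rw [lagZ_neg (by omega), lagZ_neg (by omega), lagZ_neg (by omega)]; simp
  · subst h
    have e1 : lagZ (-1:ℤ) (β+1) = 0 := lagZ_neg (by norm_num) _
    have e2 : lagZ (-1:ℤ) β = 0 := lagZ_neg (by norm_num) _
    rw [e1, e2]
    push_cast
    simp
  · obtain ⟨m, rfl⟩ : ∃ m : ℕ, k = (m : ℤ) := ⟨k.toNat, by omega⟩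
    rw [show ((m:ℤ) + 1) = ((m+1 : ℕ) : ℤ) from by push_cast; ring]
    rw [lagZ_coe, lagZ_coe, lagZ_coe]
    push_cast
    exact L4 m β

-- Z3 single step
lemma Z3 (n : ℤ) (m : ℕ) :
    derivative (X^(m+1) * lagZ n ((m:ℝ)+1)) = ((n:ℝ)+(m:ℝ)+1) • (X^m * lagZ n (m:ℝ)) := by
  rcases lt_or_ge n 0 with h | h
  · rw [lagZ_neg h, lagZ_neg h]; simp
  · obtain ⟨j, rfl⟩ : ∃ j : ℕ, n = (j : ℤ) := ⟨n.toNat, by omega⟩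
    rw [lagZ_coe, lagZ_coe]
    push_cast
    exact L3 j m

-- iterated Z3
lemma ZD (n : ℤ) : ∀ (j : ℕ),
    derivative^[j] (X^j * lagZ n (j:ℝ))
      = (∏ i ∈ Finset.range j, ((n:ℝ)+(i:ℝ)+1)) • (X^0 * lagZ n (0:ℝ))
  | 0 => by simp
  | (j+1) => by
    rw [Function.iterate_succ_apply]
    rw [show ((j+1:ℕ):ℝ) = (j:ℝ)+1 from by push_cast; ring, Z3 n j]
    rw [Polynomial.iterate_derivative_smul, ZD n j, smul_smul, Finset.prod_range_succ]
    congr 1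
    ring

lemma poch_prod (m : ℕ) (y : ℝ) :
    (ascPochhammer ℝ m).eval y = ∏ i ∈ Finset.range m, (y + i) := by
  induction m with
  | zero => simp
  | succ m ih => rw [poch_sr, ih, Finset.prod_range_succ]

lemma iterDeriv_polyEval (p : ℝ[X]) : ∀ (m : ℕ),
    iteratedDeriv m (fun x : ℝ => p.eval x) = fun x => (derivative^[m] p).eval x
  | 0 => by simp
  | (m+1) => by
    rw [iteratedDeriv_succ, iterDeriv_polyEval p m]
    funext x
    rw [Function.iterate_succ_apply']
    exact Polynomial.deriv _

noncomputable def opA (q : ℝ[X]) : ℝ[X] := derivative q - q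

lemma deriv_exp_poly (q : ℝ[X]) :
    deriv (fun t : ℝ => Real.exp (-t) * q.eval t)
      = fun t => Real.exp (-t) * (opA q).eval t := by
  funext t
  have h1 : HasDerivAt (fun t : ℝ => Real.exp (-t)) (-Real.exp (-t)) t := by
    simpa using (hasDerivAt_neg t).exp
  have h2 : HasDerivAt (fun t : ℝ => q.eval t) ((derivative q).eval t) t :=
    q.hasDerivAt t
  have h3 : HasDerivAt (fun t : ℝ => Real.exp (-t) * q.eval t)
      (-Real.exp (-t) * q.eval t + Real.exp (-t) * (derivative q).eval t) t := h1.mul h2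
  rw [h3.deriv]
  simp only [opA, eval_sub]
  ring

lemma iterDeriv_exp_poly : ∀ (m : ℕ) (q : ℝ[X]),
    iteratedDeriv m (fun t : ℝ => Real.exp (-t) * q.eval t)
      = fun t => Real.exp (-t) * (opA^[m] q).eval t
  | 0, q => by simp
  | (m+1), q => by
    rw [iteratedDeriv_succ', deriv_exp_poly, iterDeriv_exp_poly m (opA q),
      Function.iterate_succ_apply]

lemma opA_lagZ (k : ℤ) (β : ℝ) : opA (lagZ k β) = -lagZ k (β+1) := Z5 k β

lemma opA_comb (a b : ℝ) (k l : ℤ) (p q : ℝ[X]) :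
    opA (a • p + b • q) = a • opA p + b • opA q := by
  simp only [opA, derivative_add, derivative_smul, smul_sub]
  abel

lemma opA_iter_comb (a b : ℝ) (k l : ℤ) : ∀ (j : ℕ) (β : ℝ),
    opA^[j] (a • lagZ k β + b • lagZ l β)
      = ((-1:ℝ)^j * a) • lagZ k (β+j) + ((-1:ℝ)^j * b) • lagZ l (β+j)
  | 0, β => by simp
  | (j+1), β => by
    rw [Function.iterate_succ_apply', opA_iter_comb a b k l j β, opA_comb _ _ k l,
      opA_lagZ, opA_lagZ]
    rw [show β + ((j:ℕ)+1 : ℕ) = (β + (j:ℕ)) + 1 from by push_cast; ring]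
    rw [smul_neg, smul_neg, show ((-1:ℝ)^(j+1) * a) = -((-1:ℝ)^j * a) from by ring,
      show ((-1:ℝ)^(j+1) * b) = -((-1:ℝ)^j * b) from by ring, neg_smul, neg_smul]

lemma iter_deriv_sub (m : ℕ) (p q : ℝ[X]) :
    derivative^[m] (p - q) = derivative^[m] p - derivative^[m] q := by
  induction m with
  | zero => simp
  | succ m ih => rw [Function.iterate_succ_apply', Function.iterate_succ_apply',
      Function.iterate_succ_apply', ih, derivative_sub]

lemma prod_poch_a (α : ℕ) (n : ℤ) :
    (∏ i ∈ Finset.range (α+1), (((n:ℤ):ℝ)+(i:ℝ)+1))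
      = (ascPochhammer ℝ (α+1)).eval ((n:ℝ)+1) := by
  rw [poch_prod]
  exact Finset.prod_congr rfl fun i _ => by ring

lemma prod_poch_b (α : ℕ) (n : ℤ) :
    (∏ i ∈ Finset.range (α+1), ((((n-1):ℤ):ℝ)+(i:ℝ)+1))
      = (ascPochhammer ℝ (α+1)).eval ((n:ℝ)) := by
  rw [poch_prod]
  refine Finset.prod_congr rfl fun i _ => ?_
  push_cast
  ring

lemma Qcomp (α : ℕ) (n : ℤ) :
    derivative^[α+2] (X^(α+1) * lagZ n ((α:ℝ)))
      = (-((ascPochhammer ℝ (α+1)).eval ((n:ℝ)+1))) • lagZ (n-1) 1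
        + ((ascPochhammer ℝ (α+1)).eval ((n:ℝ))) • lagZ (n-2) 1 := by
  rw [Z2 n ((α:ℝ)), mul_sub]
  rw [show α+2 = (α+1)+1 from rfl, Function.iterate_succ_apply', iter_deriv_sub]
  rw [show ((α:ℝ)+1) = ((α+1:ℕ):ℝ) from by push_cast; ring]
  rw [ZD n (α+1), ZD (n-1) (α+1)]
  simp only [pow_zero, one_mul]
  rw [derivative_sub, derivative_smul, derivative_smul, Z1 n, Z1 (n-1)]
  rw [show (0:ℝ)+1 = 1 from by norm_num]
  rw [prod_poch_a α n, prod_poch_b α n]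
  rw [show n-1-1 = n-2 from by ring]
  rw [smul_neg, smul_neg, neg_smul]
  abel

lemma PFinal (α : ℕ) (n : ℤ) :
    X * (((ascPochhammer ℝ (α+1)).eval ((n:ℝ)+1)) • lagZ (n-1) ((α:ℝ)+3)
          - ((ascPochhammer ℝ (α+1)).eval ((n:ℝ))) • lagZ (n-2) ((α:ℝ)+3))
        + ((ascPochhammer ℝ (α+2)).eval ((n:ℝ))) • lagZ n ((α:ℝ))
      = ((ascPochhammer ℝ α).eval ((n:ℝ)+1) * ((α:ℝ)+1) * ((α:ℝ)+2))
          • lagZ (n-1) ((α:ℝ)+2) := by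
  have ha : (ascPochhammer ℝ (α+1)).eval ((n:ℝ)+1)
      = (ascPochhammer ℝ α).eval ((n:ℝ)+1) * (((n:ℝ)+1) + α) := poch_sr α ((n:ℝ)+1)
  have hb : (ascPochhammer ℝ (α+1)).eval ((n:ℝ))
      = (n:ℝ) * (ascPochhammer ℝ α).eval ((n:ℝ)+1) := poch_sl α (n:ℝ)
  have hpc : (ascPochhammer ℝ (α+2)).eval ((n:ℝ))
      = (n:ℝ) * (ascPochhammer ℝ (α+1)).eval ((n:ℝ)+1) := poch_sl (α+1) (n:ℝ)
  have e1 : lagZ n ((α:ℝ)) = lagZ n ((α:ℝ)+2) - (2:ℝ) • lagZ (n-1) ((α:ℝ)+2)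
      + lagZ (n-2) ((α:ℝ)+2) := by
    rw [Z2 n ((α:ℝ)), Z2 n ((α:ℝ)+1), Z2 (n-1) ((α:ℝ)+1)]
    rw [show (α:ℝ)+1+1 = (α:ℝ)+2 from by ring, show n-1-1 = n-2 from by ring]
    module
  rw [mul_sub, mul_smul_comm, mul_smul_comm]
  rw [show (α:ℝ)+3 = ((α:ℝ)+2)+1 from by ring]
  rw [Z4 (n-1) ((α:ℝ)+2), Z4 (n-2) ((α:ℝ)+2)]
  rw [show n-1+1 = n from by ring, show n-2+1 = n-1 from by ring]
  rw [e1, hb, hpc, ha]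
  push_cast
  module

lemma QcompN (α n : ℕ) :
    derivative^[α+2] (X^(α+1) * lagP n ((α:ℝ)))
      = (-((ascPochhammer ℝ (α+1)).eval ((n:ℝ)+1))) • lagZ ((n:ℤ)-1) 1
        + ((ascPochhammer ℝ (α+1)).eval ((n:ℝ))) • lagZ ((n:ℤ)-2) 1 := by
  have h := Qcomp α (n:ℤ)
  rw [lagZ_coe] at h
  push_cast at h ⊢
  exact h

theorem laguerre_type_second_identity (α : ℕ) (n : ℕ) (hn : 1 ≤ n) (x : ℝ) :
    lagTypeOp α (laguerre n (α : ℝ)) x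
        + (ascPochhammer ℝ (α + 2)).eval (n : ℝ) * laguerre n (α : ℝ) x
      = (ascPochhammer ℝ α).eval ((n : ℝ) + 1) * ((α : ℝ) + 1) * ((α : ℝ) + 2)
          * laguerre (n - 1) ((α : ℝ) + 2) x := by
  have hfun : (fun s : ℝ => s ^ (α+1) * laguerre n (α:ℝ) s)
      = fun s : ℝ => (X^(α+1) * lagP n (α:ℝ)).eval s := by
    funext s; rw [eval_mul, eval_pow, eval_X, lagP_eval]
  have hop := opA_iter_comb (-((ascPochhammer ℝ (α+1)).eval ((n:ℝ)+1)))
    ((ascPochhammer ℝ (α+1)).eval ((n:ℝ))) ((n:ℤ)-1) ((n:ℤ)-2) (α+2) 1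
  simp only [lagTypeOp, hfun, iterDeriv_polyEval, QcompN, iterDeriv_exp_poly, hop]
  rw [show ((1:ℝ)+((α+2:ℕ):ℝ)) = (α:ℝ)+3 from by push_cast; ring]
  have hP := congrArg (fun p : ℝ[X] => p.eval x) (PFinal α (n:ℤ))
  simp only [eval_add, eval_mul, eval_smul, eval_sub, eval_X, smul_eq_mul,
    Int.cast_natCast] at hP ⊢
  have hlag : laguerre n (α:ℝ) x = (lagZ ((n:ℤ)) ((α:ℝ))).eval x := by
    rw [lagZ_coe, lagP_eval]
  have hlag2 : laguerre (n-1) ((α:ℝ)+2) x = (lagZ ((n:ℤ)-1) ((α:ℝ)+2)).eval x := by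
    rw [show (n:ℤ)-1 = ((n-1:ℕ):ℤ) from by omega, lagZ_coe, lagP_eval]
  rw [hlag, hlag2]
  have hexp : Real.exp x * Real.exp (-x) = 1 := by
    rw [← Real.exp_add]; simp
  have hsgn : (-1:ℝ)^(α+1) * (-1:ℝ)^(α+2) = -1 := by
    rw [← pow_add]
    exact Odd.neg_one_pow ⟨α+1, by ring⟩
  set a := (ascPochhammer ℝ (α+1)).eval ((n:ℝ)+1)
  set b := (ascPochhammer ℝ (α+1)).eval ((n:ℝ))
  set e1 := (lagZ ((n:ℤ)-1) ((α:ℝ)+3)).eval x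
  set e2 := (lagZ ((n:ℤ)-2) ((α:ℝ)+3)).eval x
  set u1 := (lagZ ((n:ℤ)) ((α:ℝ))).eval x
  set u2 := (lagZ ((n:ℤ)-1) ((α:ℝ)+2)).eval x
  linear_combination hP + (x*(-a*e1+b*e2)) * Real.exp x * Real.exp (-x) * hsgn
    - (x*(-a*e1+b*e2)) * hexp
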